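/- For every integer k ≥ 1 and every sequence of positive real numbers p_1, …, p_k with p_1 + ⋯ + p_k = 1, there exist pairwise distinct binary strings w_1, …, w_k such that ν(w_1) < ν(w_2) < ⋯ < ν(w_k) and, for each i, the length of w_i (as a real number) is at most log₂(1/p_i). -/

import Mathlib

noncomputable def nu : List Bool → ℝ
  | [] => 1 / 2
  | b :: t => (if b then (1 : ℝ) / 2 else 0) + nu t / 2

lemma exists_nu (m : ℕ) : ∀ c : ℕ, 0 < c → c < 2^(m+1) →
    ∃ w : List Bool, nu w = c / 2^(m+1) ∧ w.length ≤ m := by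
  induction m with
  | zero =>
    intro c h1 h2
    interval_cases c
    exact ⟨[], by norm_num [nu], by simp⟩
  | succ m ih =>
    intro c h1 h2
    rcases lt_trichotomy c (2^(m+1)) with h | h | h
    · obtain ⟨w, hw, hl⟩ := ih c h1 h
      refine ⟨false :: w, ?_, by simpa using hl⟩
      simp [nu, hw, pow_succ]
      ring
    · refine ⟨[], ?_, by simp⟩
      show (1:ℝ)/2 = c / 2^(m+2)
      rw [h]
      push_cast
      rw [pow_succ _ (m+1)]
      have : (2:ℝ)^(m+1) ≠ 0 := by positivity
      field_simp
    · obtain ⟨w, hw, hl⟩ := ih (c - 2^(m+1)) (by omega) (by omega)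
      refine ⟨true :: w, ?_, by simpa using hl⟩
      have hcast : ((c - 2^(m+1) : ℕ) : ℝ) = (c:ℝ) - 2^(m+1) := by
        push_cast [h.le]; ring
      show (1:ℝ)/2 + nu w / 2 = c / 2^(m+2)
      rw [hw, hcast, pow_succ _ (m+1)]
      have h2 : (2:ℝ)^(m+1) ≠ 0 := by positivity
      field_simp
      ring

theorem mehlhorn_weak (k : ℕ) (hk : 1 ≤ k) (p : Fin k → ℝ)
    (hpos : ∀ i, 0 < p i) (hsum : ∑ i, p i = 1) :
    ∃ w : Fin k → List Bool,
      Function.Injective w ∧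
      (∀ i j, i < j → nu (w i) < nu (w j)) ∧
      (∀ i, ((w i).length : ℝ) ≤ Real.logb 2 (1 / p i)) := by
  have hple : ∀ i, p i ≤ 1 := by
    intro i
    rw [← hsum]
    exact Finset.single_le_sum (fun j _ => (hpos j).le) (Finset.mem_univ i)
  set T : Fin k → ℝ := fun i => ∑ j ∈ Finset.Iio i, p j with hT
  have hT0 : ∀ i, 0 ≤ T i := fun i => Finset.sum_nonneg fun j _ => (hpos j).le
  have hTIic : ∀ i, T i + p i = ∑ j ∈ Finset.Iic i, p j := by
    intro i
    rw [← Finset.Iio_insert, Finset.sum_insert (by simp)]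
    ring
  have hTle : ∀ i, T i + p i ≤ 1 := by
    intro i
    rw [hTIic, ← hsum]
    exact Finset.sum_le_sum_of_subset_of_nonneg (Finset.subset_univ _)
      (fun j _ _ => (hpos j).le)
  have hTmono : ∀ i j : Fin k, i < j → T i + p i ≤ T j := by
    intro i j hij
    rw [hTIic]
    exact Finset.sum_le_sum_of_subset_of_nonneg
      (fun a ha => by simp at ha ⊢; omega) (fun a _ _ => (hpos a).le)
  have key : ∀ i : Fin k, ∃ w : List Bool,
      T i < nu w ∧ nu w < T i + p i ∧ (w.length : ℝ) ≤ Real.logb 2 (1 / p i) := by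
    intro i
    have h1pi : 1 ≤ 1 / p i := by
      rw [le_div_iff₀ (hpos i)]; linarith [hple i]
    have hlog0 : 0 ≤ Real.logb 2 (1 / p i) := Real.logb_nonneg one_lt_two h1pi
    set m := ⌊Real.logb 2 (1 / p i)⌋₊ with hm
    have hm1 : (m : ℝ) ≤ Real.logb 2 (1 / p i) := Nat.floor_le hlog0
    have hm2 : Real.logb 2 (1 / p i) < m + 1 := Nat.lt_floor_add_one _
    have hNpos : (0:ℝ) < 2 ^ (m + 1) := by positivity
    have hpi_gt : (2:ℝ)^(m+1) * p i > 1 := by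
      have := (Real.logb_lt_iff_lt_rpow one_lt_two (by positivity)).mp hm2
      rw [show ((m:ℝ)+1) = ((m+1 : ℕ):ℝ) by push_cast; ring, Real.rpow_natCast] at this
      rw [gt_iff_lt, ← div_lt_iff₀ (hpos i)]
      linarith
    set c := ⌊T i * 2^(m+1)⌋₊ + 1 with hc
    have hcfloor : (c:ℝ) ≤ T i * 2^(m+1) + 1 := by
      rw [hc]
      push_cast
      have := Nat.floor_le (mul_nonneg (hT0 i) (by positivity) : (0:ℝ) ≤ T i * 2^(m+1))
      linarith
    have hclt : (c:ℝ) < 2^(m+1) := by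
      have h2 : T i * 2^(m+1) + 1 < (T i + p i) * 2^(m+1) := by nlinarith [hpi_gt]
      have h3 : (T i + p i) * 2^(m+1) ≤ 2^(m+1) := by nlinarith [hTle i, hNpos]
      linarith
    have hcltN : c < 2^(m+1) := by exact_mod_cast hclt
    obtain ⟨w, hw, hl⟩ := exists_nu m c (by omega) hcltN
    have hwval : nu w = c / 2^(m+1) := hw
    refine ⟨w, ?_, ?_, ?_⟩
    · rw [hwval, lt_div_iff₀ hNpos]
      have : T i * 2^(m+1) < ⌊T i * 2^(m+1)⌋₊ + 1 := Nat.lt_floor_add_one _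
      rw [hc]
      push_cast
      push_cast at this
      linarith
    · rw [hwval, div_lt_iff₀ hNpos]
      nlinarith [hpi_gt]
    · calc ((w.length : ℝ)) ≤ m := by exact_mod_cast hl
        _ ≤ _ := hm1
  choose w hw1 hw2 hw3 using key
  have hmono : ∀ i j, i < j → nu (w i) < nu (w j) := by
    intro i j hij
    calc nu (w i) < T i + p i := hw2 i
      _ ≤ T j := hTmono i j hij
      _ < nu (w j) := hw1 j
  refine ⟨w, ?_, hmono, hw3⟩
  intro a b hab
  by_contra hne
  rcases lt_or_gt_of_ne hne with h | h
  · exact absurd (congrArg nu hab) (ne_of_lt (hmono a b h))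
  · exact absurd (congrArg nu hab) (ne_of_gt (hmono b a h))
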